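/- If F is a Wetzel family and ⟨z_α : α < κ⟩ is an enumeration of ℂ (κ = 2^ℵ₀), then there exist cardinals μ_α < 2^ℵ₀ and an injection assigning to each f ∈ F a function σ_f ∈ ∏_{α<κ} μ_α such that for distinct f, g ∈ F, the set {α < κ : σ_f(α) = σ_g(α)} is countable. -/

import Mathlib

def IsWetzel (F : Set (ℂ → ℂ)) : Prop :=
  (∀ f ∈ F, Differentiable ℂ f) ∧
    ∀ z : ℂ, Cardinal.mk ((fun f : ℂ → ℂ => f z) '' F) < Cardinal.mk F

open Cardinal Filter Set

/-- Two distinct entire functions agree on a countable set. -/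
lemma countable_eq_set_of_entire {f g : ℂ → ℂ} (hf : Differentiable ℂ f)
    (hg : Differentiable ℂ g) (hne : f ≠ g) : Set.Countable {w : ℂ | f w = g w} := by
  have hfa : AnalyticOnNhd ℂ f Set.univ := hf.differentiableOn.analyticOnNhd isOpen_univ
  have hga : AnalyticOnNhd ℂ g Set.univ := hg.differentiableOn.analyticOnNhd isOpen_univ
  rcases hfa.eqOn_or_eventually_ne_of_preconnected hga isPreconnected_univ with h | h
  · exact absurd (funext fun x => h (Set.mem_univ x)) hne
  · have h' : {x : ℂ | f x ≠ g x} ∈ Filter.codiscrete ℂ := h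
    obtain ⟨-, hd⟩ := mem_codiscrete'.1 h'
    have hcompl : {x : ℂ | f x ≠ g x}ᶜ = {w : ℂ | f w = g w} := by
      ext x; simp
    rw [hcompl] at hd
    have : Countable ↑{w : ℂ | f w = g w} :=
      haveI := hd.to_subtype
      TopologicalSpace.separableSpace_iff_countable.1 inferInstance
    exact Set.countable_coe_iff.1 this

lemma mk_le_continuum_of_entire (F : Set (ℂ → ℂ)) (hF : ∀ f ∈ F, Differentiable ℂ f) :
    Cardinal.mk F ≤ Cardinal.continuum := by
  obtain ⟨s, hsc, hsd⟩ := TopologicalSpace.exists_countable_dense ℂ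
  have : Countable ↥s := hsc.to_subtype
  have hinj : Function.Injective (fun f : F => fun x : s => (f : ℂ → ℂ) x) := by
    intro f g h
    have heq : Set.EqOn (f : ℂ → ℂ) (g : ℂ → ℂ) s := fun x hx =>
      congrFun h ⟨x, hx⟩
    have : (f : ℂ → ℂ) = (g : ℂ → ℂ) :=
      Continuous.ext_on hsd (hF f f.2).continuous (hF g g.2).continuous heq
    exact Subtype.ext this
  calc Cardinal.mk F ≤ Cardinal.mk (s → ℂ) := Cardinal.mk_le_of_injective hinj
    _ = Cardinal.mk ℂ ^ Cardinal.mk s := by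
        simpa using Cardinal.mk_arrow (↥s) ℂ
    _ ≤ Cardinal.continuum ^ (ℵ₀ : Cardinal) := by
        rw [mk_complex]
        exact Cardinal.power_le_power_left continuum_ne_zero Cardinal.mk_le_aleph0
    _ = Cardinal.continuum := Cardinal.continuum_power_aleph0

universe u

instance instWO (o : Ordinal.{u}) : IsWellOrder o.ToType (· < ·) := ⟨⟩

theorem wetzel_aux (F : Set (ℂ → ℂ)) (hF : IsWetzel F)
    (ι : Type) (hι : Cardinal.mk ι = Cardinal.continuum)
    (z : ι → ℂ) (hz : Function.Bijective z) :
    ∃ μ : ι → Cardinal.{u}, (∀ α, μ α < Cardinal.continuum) ∧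
      ∃ σ : F → ∀ α : ι, {o : Ordinal // o < (μ α).ord},
        Function.Injective σ ∧
        ∀ f g : F, f ≠ g → Set.Countable {α : ι | σ f α = σ g α} := by
  obtain ⟨hdiff, hcard⟩ := hF
  have hFle : Cardinal.mk F ≤ Cardinal.continuum := mk_le_continuum_of_entire F hdiff
  set μ : ι → Cardinal.{u} :=
    fun α => Cardinal.lift.{u} (Cardinal.mk ((fun f : ℂ → ℂ => f (z α)) '' F)) with hμ
  have hμlt : ∀ α, μ α < Cardinal.continuum := by
    intro α
    have h1 := Cardinal.lift_lt.{0,u}.2 (lt_of_lt_of_le (hcard (z α)) hFle)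
    rwa [Cardinal.lift_continuum] at h1
  have hmk : ∀ α, Nonempty (((fun f : ℂ → ℂ => f (z α)) '' F) ≃ (μ α).ord.ToType) := by
    intro α
    rw [← Cardinal.lift_mk_eq', Cardinal.mk_ord_toType, hμ, Cardinal.lift_lift]
  refine ⟨μ, hμlt, ?_⟩
  let E : ∀ α, ((fun f : ℂ → ℂ => f (z α)) '' F) ≃ (μ α).ord.ToType :=
    fun α => (hmk α).some
  let σ : F → ∀ α : ι, {o : Ordinal // o < (μ α).ord} := fun f α =>
    ⟨Ordinal.typein (α := (μ α).ord.ToType) (· < ·)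
      (E α ⟨(f : ℂ → ℂ) (z α), ⟨f, f.2, rfl⟩⟩), by
      have := Ordinal.typein_lt_type (α := (μ α).ord.ToType) (· < ·)
        (E α ⟨(f : ℂ → ℂ) (z α), ⟨f, f.2, rfl⟩⟩)
      rwa [Ordinal.type_toType] at this⟩
  have key : ∀ (f g : F) (α : ι), σ f α = σ g α ↔ (f : ℂ → ℂ) (z α) = (g : ℂ → ℂ) (z α) := by
    intro f g α
    constructor
    · intro h
      have h1 := Subtype.ext_iff.1 h
      have h2 := Ordinal.typein_injective (α := (μ α).ord.ToType) (· < ·) h1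
      have h3 := (E α).injective h2
      exact Subtype.ext_iff.1 h3
    · intro h
      have harg : (⟨(f : ℂ → ℂ) (z α), ⟨f, f.2, rfl⟩⟩ :
            ((fun f : ℂ → ℂ => f (z α)) '' F)) = ⟨(g : ℂ → ℂ) (z α), ⟨g, g.2, rfl⟩⟩ :=
        Subtype.ext h
      simp only [σ, harg]
  refine ⟨σ, ?_, ?_⟩
  · intro f g h
    apply Subtype.ext
    funext w
    obtain ⟨α, rfl⟩ := hz.2 w
    exact (key f g α).1 (congrFun h α)
  · intro f g hne
    have hfg : (f : ℂ → ℂ) ≠ (g : ℂ → ℂ) := fun h => hne (Subtype.ext h)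
    have hcnt := countable_eq_set_of_entire (hdiff f f.2) (hdiff g g.2) hfg
    have hsub : {α : ι | σ f α = σ g α} ⊆
        z ⁻¹' {w : ℂ | (f : ℂ → ℂ) w = (g : ℂ → ℂ) w} := fun α hα => (key f g α).1 hα
    exact ((hcnt.preimage hz.1)).mono hsub

theorem wetzel_gives_ad_functions (F : Set (ℂ → ℂ)) (hF : IsWetzel F)
    (ι : Type) (hι : Cardinal.mk ι = Cardinal.continuum)
    (z : ι → ℂ) (hz : Function.Bijective z) :
    ∃ μ : ι → Cardinal, (∀ α, μ α < Cardinal.continuum) ∧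
      ∃ σ : F → ∀ α : ι, {o : Ordinal // o < (μ α).ord},
        Function.Injective σ ∧
        ∀ f g : F, f ≠ g → Set.Countable {α : ι | σ f α = σ g α} :=
  wetzel_aux F hF ι hι z hz
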